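/- The numerical range of a sesquilinear form is convex: if Ω is a sesquilinear form on a complex vector subspace D of a Hilbert space H, then the set { Ω(ξ,ξ) : ξ ∈ D, ‖ξ‖ = 1 } is a convex subset of ℂ. -/

import Mathlib

open scoped ComplexConjugate

/-- Expansion of a sesquilinear form on a combination `α•x + β•y`. -/
lemma th_expand {H : Type*} [NormedAddCommGroup H] [InnerProductSpace ℂ H]
    {D : Submodule ℂ H} (Ω : D → D → ℂ)
    (hadd₁ : ∀ ξ ξ' η : D, Ω (ξ + ξ') η = Ω ξ η + Ω ξ' η)
    (hsmul₁ : ∀ (c : ℂ) (ξ η : D), Ω (c • ξ) η = c * Ω ξ η)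
    (hadd₂ : ∀ ξ η η' : D, Ω ξ (η + η') = Ω ξ η + Ω ξ η')
    (hsmul₂ : ∀ (c : ℂ) (ξ η : D), Ω ξ (c • η) = conj c * Ω ξ η)
    (α β : ℂ) (x y : D) :
    Ω (α • x + β • y) (α • x + β • y)
      = α * conj α * Ω x x + α * conj β * Ω x y
        + β * conj α * Ω y x + β * conj β * Ω y y := by
  simp only [hadd₁, hadd₂, hsmul₁, hsmul₂]
  ring

/-- Core case: `Ω ξ ξ = 1`, `Ω η η = 0`, then every `t ∈ [0,1]` is attained. -/
lemma th_core {H : Type*} [NormedAddCommGroup H] [InnerProductSpace ℂ H]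
    {D : Submodule ℂ H} (Ω : D → D → ℂ)
    (hadd₁ : ∀ ξ ξ' η : D, Ω (ξ + ξ') η = Ω ξ η + Ω ξ' η)
    (hsmul₁ : ∀ (c : ℂ) (ξ η : D), Ω (c • ξ) η = c * Ω ξ η)
    (hadd₂ : ∀ ξ η η' : D, Ω ξ (η + η') = Ω ξ η + Ω ξ η')
    (hsmul₂ : ∀ (c : ℂ) (ξ η : D), Ω ξ (c • η) = conj c * Ω ξ η)
    (ξ η : D) (hξ : ‖(ξ : H)‖ = 1) (hη : ‖(η : H)‖ = 1)
    (hΩξ : Ω ξ ξ = 1) (hΩη : Ω η η = 0)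
    (t : ℝ) (ht : t ∈ Set.Icc (0:ℝ) 1) :
    ∃ ζ : D, ‖(ζ : H)‖ = 1 ∧ Ω ζ ζ = (t : ℂ) := by
  classical
  -- phase rotation of η
  set d : ℂ := Ω ξ η - conj (Ω η ξ) with hd
  set u : ℂ := if d = 0 then 1 else (‖d‖ : ℂ)⁻¹ * d with hu
  have hu1 : ‖u‖ = 1 := by
    by_cases h : d = 0 <;> simp [hu, h, norm_inv, norm_ne_zero_iff]
  have hud : (conj u * d).im = 0 := by
    by_cases h : d = 0
    · simp [h]
    · rw [hu, if_neg h]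
      have : conj ((‖d‖ : ℂ)⁻¹ * d) * d = (‖d‖ : ℂ)⁻¹ * (conj d * d) := by
        simp [map_mul, map_inv₀, Complex.conj_ofReal]; ring
      rw [this]
      have h4 : (starRingEnd ℂ) d * d = ((Complex.normSq d : ℝ) : ℂ) := by
        rw [mul_comm, Complex.mul_conj]
      rw [h4]
      simp
  set η' : D := u • η with hη'def
  have hη'1 : ‖(η' : H)‖ = 1 := by
    rw [hη'def]
    simp [norm_smul, hu1, hη]
  have hΩη' : Ω η' η' = 0 := by
    rw [hη'def, hsmul₁, hsmul₂, hΩη]; ring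
  set c : ℂ := Ω ξ η' + Ω η' ξ with hc
  have hcim : c.im = 0 := by
    have h1 : c = conj u * Ω ξ η + u * Ω η ξ := by
      rw [hc, hη'def, hsmul₁, hsmul₂]
    have h2 : (conj u * conj (Ω η ξ)).im = -(u * Ω η ξ).im := by
      rw [← map_mul]
      simp only [Complex.conj_im, Complex.mul_im]
    have h3 : (conj u * d).im = (conj u * Ω ξ η).im + (u * Ω η ξ).im := by
      rw [hd, mul_sub, Complex.sub_im, h2]
      ring
    rw [h1, Complex.add_im]
    rw [h3] at hud
    linarith
  have hcre : c = (c.re : ℂ) := Complex.ext rfl (by simp [hcim])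
  -- the path
  set g : ℝ → H := fun σ => (σ : ℂ) • (ξ : H) + ((1 - σ : ℝ) : ℂ) • (η' : H) with hg
  set v : ℝ → D := fun σ => (σ : ℂ) • ξ + ((1 - σ : ℝ) : ℂ) • η' with hv
  have hvg : ∀ σ, ((v σ : D) : H) = g σ := by intro σ; simp [hv, hg]
  have hgne : ∀ σ ∈ Set.Icc (0:ℝ) 1, g σ ≠ 0 := by
    intro σ hσ h0
    rw [hg] at h0
    simp only at h0
    have hσ0 : (0:ℝ) ≤ σ := hσ.1
    have hσ1 : σ ≤ 1 := hσ.2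
    have hhalf : σ = 1/2 := by
      have h1 : (σ : ℂ) • (ξ : H) = -(((1 - σ : ℝ) : ℂ) • (η' : H)) :=
        eq_neg_of_add_eq_zero_left h0
      have h2 := congrArg norm h1
      rw [norm_neg, norm_smul, norm_smul, hξ, hη'1] at h2
      simp only [Complex.norm_real, Real.norm_eq_abs, mul_one] at h2
      rw [abs_of_nonneg hσ0, abs_of_nonneg (by linarith)] at h2
      linarith
    subst hhalf
    have hxy : (ξ : H) = -(η' : H) := by
      push_cast at h0
      norm_num at h0
      linear_combination (norm := module) (2:ℂ) • h0
    have hξη : ξ = (-1 : ℂ) • η' := by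
      apply Subtype.ext
      simpa using hxy
    rw [hξη, hsmul₁, hsmul₂, hΩη'] at hΩξ
    simp at hΩξ
  -- the real function
  set f : ℝ → ℝ := fun σ => (σ^2 + σ * (1 - σ) * c.re) / ‖g σ‖^2 with hf
  have hgcont : Continuous g := by
    apply Continuous.add
    · exact (Complex.continuous_ofReal).smul continuous_const
    · exact (Complex.continuous_ofReal.comp (continuous_const.sub continuous_id)).smul
        continuous_const
  have hfcont : ContinuousOn f (Set.Icc 0 1) := by
    apply ContinuousOn.div
    · fun_prop
    · exact ((hgcont.norm.pow 2).continuousOn)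
    · intro σ hσ
      exact pow_ne_zero 2 (norm_ne_zero_iff.mpr (hgne σ hσ))
  have hf0 : f 0 = 0 := by simp [hf]
  have hf1 : f 1 = 1 := by
    have : g 1 = (ξ : H) := by simp [hg]
    simp [hf, this, hξ]
  -- IVT
  have hsub : Set.Icc (0:ℝ) 1 ⊆ f '' Set.Icc 0 1 := by
    have := intermediate_value_Icc (by norm_num : (0:ℝ) ≤ 1) hfcont
    rw [hf0, hf1] at this
    exact this
  obtain ⟨σ, hσmem, hσt⟩ := hsub ht
  -- the witness
  have hgσ : ‖g σ‖ ≠ 0 := norm_ne_zero_iff.mpr (hgne σ hσmem)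
  refine ⟨((‖g σ‖⁻¹ : ℝ) : ℂ) • v σ, ?_, ?_⟩
  · rw [Submodule.coe_smul, hvg, norm_smul]
    simp [inv_mul_cancel₀ hgσ]
  · rw [hsmul₁, hsmul₂, Complex.conj_ofReal]
    have hΩv : Ω (v σ) (v σ) = ((σ^2 + σ * (1 - σ) * c.re : ℝ) : ℂ) := by
      rw [hv]
      rw [th_expand Ω hadd₁ hsmul₁ hadd₂ hsmul₂]
      rw [hΩξ, hΩη']
      rw [Complex.conj_ofReal, Complex.conj_ofReal]
      have : ((σ:ℂ) * (((1 - σ : ℝ)):ℂ)) * c = ((σ * (1-σ) : ℝ) : ℂ) * (c.re : ℂ) := by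
        rw [← hcre]; push_cast; ring
      push_cast
      rw [hc] at this ⊢
      push_cast at this
      linear_combination this
    rw [hΩv, ← hσt, hf]
    push_cast
    field_simp

/-- Toeplitz–Hausdorff for sesquilinear forms. -/
theorem stmt14 {H : Type*} [NormedAddCommGroup H] [InnerProductSpace ℂ H]
    (D : Submodule ℂ H) (Ω : D → D → ℂ)
    (hadd₁ : ∀ ξ ξ' η : D, Ω (ξ + ξ') η = Ω ξ η + Ω ξ' η)
    (hsmul₁ : ∀ (c : ℂ) (ξ η : D), Ω (c • ξ) η = c * Ω ξ η)
    (hadd₂ : ∀ ξ η η' : D, Ω ξ (η + η') = Ω ξ η + Ω ξ η')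
    (hsmul₂ : ∀ (c : ℂ) (ξ η : D), Ω ξ (c • η) = conj c * Ω ξ η) :
    Convex ℝ {z : ℂ | ∃ ξ : D, ‖(ξ : H)‖ = 1 ∧ z = Ω ξ ξ} := by
  rintro z₁ ⟨ξ, hξ, rfl⟩ z₂ ⟨η, hη, rfl⟩ s t hs ht hst
  set a : ℂ := Ω ξ ξ with ha
  set b : ℂ := Ω η η with hb
  by_cases hab : a = b
  · refine ⟨ξ, hξ, ?_⟩
    rw [hab, ← add_smul, hst, one_smul, ← ha, hab]
  · set Ψ : D → D → ℂ := fun x y => (a - b)⁻¹ * (Ω x y - b * (inner ℂ (y : H) (x : H) : ℂ)) with hΨ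
    have hab' : a - b ≠ 0 := sub_ne_zero_of_ne hab
    have hΨadd₁ : ∀ x x' y : D, Ψ (x + x') y = Ψ x y + Ψ x' y := by
      intro x x' y
      simp only [hΨ, hadd₁, Submodule.coe_add, inner_add_right]
      ring
    have hΨsmul₁ : ∀ (k : ℂ) (x y : D), Ψ (k • x) y = k * Ψ x y := by
      intro k x y
      simp only [hΨ, hsmul₁, Submodule.coe_smul, inner_smul_right]
      ring
    have hΨadd₂ : ∀ x y y' : D, Ψ x (y + y') = Ψ x y + Ψ x y' := by
      intro x y y'
      simp only [hΨ, hadd₂, Submodule.coe_add, inner_add_left]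
      ring
    have hΨsmul₂ : ∀ (k : ℂ) (x y : D), Ψ x (k • y) = conj k * Ψ x y := by
      intro k x y
      simp only [hΨ, hsmul₂, Submodule.coe_smul, inner_smul_left]
      ring
    have hinner : ∀ x : D, ‖(x : H)‖ = 1 → (inner ℂ (x : H) (x : H) : ℂ) = 1 := by
      intro x hx
      rw [inner_self_eq_norm_sq_to_K, hx]
      norm_num
    have hΨξ : Ψ ξ ξ = 1 := by
      rw [hΨ]
      simp only
      rw [hinner ξ hξ, ← ha]
      field_simp
    have hΨη : Ψ η η = 0 := by
      rw [hΨ]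
      simp only
      rw [hinner η hη, ← hb]
      simp
    obtain ⟨ζ, hζ1, hζΨ⟩ := th_core Ψ hΨadd₁ hΨsmul₁ hΨadd₂ hΨsmul₂ ξ η hξ hη hΨξ hΨη s
      ⟨hs, by linarith⟩
    refine ⟨ζ, hζ1, ?_⟩
    have hζΩ : Ω ζ ζ = (s : ℂ) * (a - b) + b := by
      have := hζΨ
      rw [hΨ] at this
      simp only at this
      rw [hinner ζ hζ1] at this
      field_simp at this
      linear_combination this
    rw [hζΩ]
    have hts : (t : ℝ) = 1 - s := by linarith
    rw [hts]
    simp [Complex.real_smul]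
    ring
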